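/- Set equality (eq2): under (D1)–(D2) and (A1)–(A3), for every q ∈ [0,1], almost surely {α†(q) < min_{m∈𝓜₀} α_m} = {α#(q) < min_{m∈𝓜₀} α_m}; that is, the first crossing time of H₁ is below the minimum null generalized p-value if and only if the first crossing time of H₂ is. -/

import Mathlib

/-!
Statement 11 (set equality eq2): under (D1)–(D2) and (A1)–(A3), for every q ∈ [0,1],
almost surely {α†(q) < min_{m∈𝓜₀} α_m} = {α#(q) < min_{m∈𝓜₀} α_m}.
-/

open MeasureTheory Function Set

noncomputable section

/-- The process `H₁(α) = ∏_{m ∈ 𝓜} (1 - A_m(α))^{1 - δ_m(A_m(α)-)}`. -/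
def Hone {X ι : Type*} [Fintype ι] (A : ι → ℝ → ℝ)
    (δ : ι → ℝ → X → ℝ) (α : ℝ) (x : X) : ℝ :=
  ∏ m, (1 - A m α) ^ (1 - Function.leftLim (fun β => δ m β x) (A m α))

/-- The process `H₂(α) = (∏_{m∈𝓜₀} (1 - A_m(α))) ∏_{m∈𝓜₁} (1 - A_m(α))^{1 - δ_m(A_m(α)-)}`. -/
def Htwo {X ι : Type*} (M0 M1 : Finset ι) (A : ι → ℝ → ℝ)
    (δ : ι → ℝ → X → ℝ) (α : ℝ) (x : X) : ℝ :=
  (∏ m ∈ M0, (1 - A m α)) *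
    ∏ m ∈ M1, (1 - A m α) ^ (1 - Function.leftLim (fun β => δ m β x) (A m α))

/-- The first crossing time `α†(q) = inf {α ∈ [0,1] : H₁(α) < 1 - q}` (with `inf ∅ = 1`). -/
def alphaDag {X ι : Type*} [Fintype ι] (A : ι → ℝ → ℝ)
    (δ : ι → ℝ → X → ℝ) (q : ℝ) (x : X) : ℝ :=
  sInf ({α ∈ Set.Icc (0:ℝ) 1 | Hone A δ α x < 1 - q} ∪ {1})

/-- The first crossing time `α#(q) = inf {α ∈ [0,1] : H₂(α) < 1 - q}` (with `inf ∅ = 1`). -/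
def alphaPound {X ι : Type*} (M0 M1 : Finset ι) (A : ι → ℝ → ℝ)
    (δ : ι → ℝ → X → ℝ) (q : ℝ) (x : X) : ℝ :=
  sInf ({α ∈ Set.Icc (0:ℝ) 1 | Htwo M0 M1 A δ α x < 1 - q} ∪ {1})

/-- The generalized p-value statistic `α_m = inf {α ∈ [0,1] : δ_m(A_m(α)) = 1}`. -/
def genP {X ι : Type*} (A : ι → ℝ → ℝ) (δ : ι → ℝ → X → ℝ) (m : ι) (x : X) : ℝ :=
  sInf {α ∈ Set.Icc (0:ℝ) 1 | δ m (A m α) x = 1}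

/-- **Set equality (eq2).** -/
theorem crossing_below_min_null_pvalue_iff
    {X ι : Type*} [MeasurableSpace X] [Fintype ι] [DecidableEq ι] [Nonempty ι]
    (P : Measure X) [IsProbabilityMeasure P]
    (M0 M1 : Finset ι) (hpart : M0 ∪ M1 = Finset.univ) (hdisj : Disjoint M0 M1)
    (hM0 : M0.Nonempty)
    (δ : ι → ℝ → X → ℝ) (A : ι → ℝ → ℝ)
    (hmeas : ∀ m, ∀ α ∈ Set.Icc (0:ℝ) 1, Measurable (δ m α))
    (hvals : ∀ m, ∀ α ∈ Set.Icc (0:ℝ) 1, ∀ x, δ m α x = 0 ∨ δ m α x = 1)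
    -- (D1)
    (hD1 : ∀ m, ∀ᵐ x ∂P, δ m 0 x = 0 ∧ δ m 1 x = 1)
    -- (D2)
    (hD2 : ∀ᵐ x ∂P, ∀ m, MonotoneOn (fun α => δ m α x) (Set.Icc 0 1) ∧
      ∀ α ∈ Set.Ico (0:ℝ) 1, ContinuousWithinAt (fun β => δ m β x) (Set.Ici α) α)
    -- (A1)–(A3)
    (hArange : ∀ m, ∀ α ∈ Set.Icc (0:ℝ) 1, A m α ∈ Set.Icc (0:ℝ) 1)
    (hA1 : ∀ m, A m 0 = 0 ∧ A m 1 = 1)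
    (hA2 : ∀ m, ContinuousOn (A m) (Set.Icc 0 1) ∧ StrictMonoOn (A m) (Set.Icc 0 1))
    (hA3 : ∀ α ∈ Set.Icc (0:ℝ) 1, 1 - α ≤ ∏ m, (1 - A m α))
    (q : ℝ) (hq : q ∈ Set.Icc (0:ℝ) 1) :
    ∀ᵐ x ∂P,
      (alphaDag A δ q x < M0.inf' hM0 (fun m => genP A δ m x) ↔
        alphaPound M0 M1 A δ q x < M0.inf' hM0 (fun m => genP A δ m x)) := by
  have hD1' : ∀ᵐ x ∂P, ∀ m, δ m 0 x = 0 ∧ δ m 1 x = 1 := ae_all_iff.2 hD1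
  filter_upwards [hD1', hD2] with x hx1 hx2
  set c := M0.inf' hM0 (fun m => genP A δ m x) with hc
  have hgen_le : ∀ m, genP A δ m x ≤ 1 := by
    intro m
    apply csInf_le ⟨0, fun a ha => ha.1.1⟩
    refine ⟨⟨zero_le_one, le_refl 1⟩, ?_⟩
    rw [(hA1 m).2]; exact (hx1 m).2
  have hc_le : c ≤ 1 := by
    obtain ⟨m, hm⟩ := hM0
    exact le_trans (Finset.inf'_le _ hm) (hgen_le m)
  have hzero : ∀ m, ∀ α ∈ Set.Icc (0:ℝ) 1, α < genP A δ m x → δ m (A m α) x = 0 := by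
    intro m α hα hlt
    rcases hvals m (A m α) (hArange m α hα) x with h | h
    · exact h
    · exfalso
      have : genP A δ m x ≤ α := csInf_le ⟨0, fun a ha => ha.1.1⟩ ⟨hα, h⟩
      linarith
  have hLL : ∀ m, ∀ α ∈ Set.Ioc (0:ℝ) 1, α < genP A δ m x →
      Function.leftLim (fun β => δ m β x) (A m α) = 0 := by
    intro m α hα hlt
    have hαIcc : α ∈ Set.Icc (0:ℝ) 1 := ⟨hα.1.le, hα.2⟩
    have hA0 : (0:ℝ) < A m α := by
      have := (hA2 m).2 (Set.left_mem_Icc.2 zero_le_one) hαIcc hα.1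
      rwa [(hA1 m).1] at this
    have hf0 : ∀ β ∈ Set.Ioo (0:ℝ) (A m α), δ m β x = 0 := by
      intro β hβ
      have hβIcc : β ∈ Set.Icc (0:ℝ) 1 :=
        ⟨hβ.1.le, hβ.2.le.trans (hArange m α hαIcc).2⟩
      have h1 : δ m β x ≤ δ m (A m α) x :=
        (hx2 m).1 hβIcc (hArange m α hαIcc) hβ.2.le
      rw [hzero m α hαIcc hlt] at h1
      rcases hvals m β hβIcc x with h | h
      · exact h
      · linarith
    have hmem : Set.Ioo (0:ℝ) (A m α) ∈ nhdsWithin (A m α) (Set.Iio (A m α)) :=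
      Ioo_mem_nhdsLT hA0
    have htend : Filter.Tendsto (fun β => δ m β x) (nhdsWithin (A m α) (Set.Iio (A m α)))
        (nhds 0) := by
      apply Filter.Tendsto.congr' _ tendsto_const_nhds
      filter_upwards [hmem] with β hβ
      exact (hf0 β hβ).symm
    exact leftLim_eq_of_tendsto (h := nhdsLT_neBot (A m α)) htend
  have hHeq : ∀ α ∈ Set.Icc (0:ℝ) 1, α < c → Hone A δ α x = Htwo M0 M1 A δ α x := by
    intro α hα hlt
    rcases eq_or_lt_of_le hα.1 with h0 | h0
    · have hone : ∀ m, (1:ℝ) - A m α = 1 := by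
        intro m
        rw [← h0, (hA1 m).1]; ring
      simp [Hone, Htwo, hone, Real.one_rpow]
    · have hIoc : α ∈ Set.Ioc (0:ℝ) 1 := ⟨h0, hα.2⟩
      have hex : ∀ m ∈ M0, Function.leftLim (fun β => δ m β x) (A m α) = 0 := by
        intro m hm
        exact hLL m α hIoc (lt_of_lt_of_le hlt (Finset.inf'_le _ hm))
      unfold Hone Htwo
      rw [← hpart, Finset.prod_union hdisj]
      congr 1
      apply Finset.prod_congr rfl
      intro m hm
      rw [hex m hm, sub_zero, Real.rpow_one]
  have hbdd1 : BddBelow ({α ∈ Set.Icc (0:ℝ) 1 | Hone A δ α x < 1 - q} ∪ {1}) := by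
    refine ⟨0, fun a ha => ?_⟩
    rcases ha with ha | ha
    · exact ha.1.1
    · simp only [Set.mem_singleton_iff] at ha; simp [ha]
  have hbdd2 : BddBelow ({α ∈ Set.Icc (0:ℝ) 1 | Htwo M0 M1 A δ α x < 1 - q} ∪ {1}) := by
    refine ⟨0, fun a ha => ?_⟩
    rcases ha with ha | ha
    · exact ha.1.1
    · simp only [Set.mem_singleton_iff] at ha; simp [ha]
  have hne1 : ({α ∈ Set.Icc (0:ℝ) 1 | Hone A δ α x < 1 - q} ∪ {1}).Nonempty :=
    ⟨1, Or.inr rfl⟩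
  have hne2 : ({α ∈ Set.Icc (0:ℝ) 1 | Htwo M0 M1 A δ α x < 1 - q} ∪ {1}).Nonempty :=
    ⟨1, Or.inr rfl⟩
  constructor
  · intro h
    rw [alphaDag] at h
    obtain ⟨a, ha, halt⟩ := (csInf_lt_iff hbdd1 hne1).1 h
    rcases ha with ha | ha
    · refine (csInf_lt_iff hbdd2 hne2).2 ⟨a, Or.inl ⟨ha.1, ?_⟩, halt⟩
      rw [← hHeq a ha.1 halt]; exact ha.2
    · simp only [Set.mem_singleton_iff] at ha
      subst ha; linarith
  · intro h
    rw [alphaPound] at h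
    obtain ⟨a, ha, halt⟩ := (csInf_lt_iff hbdd2 hne2).1 h
    rcases ha with ha | ha
    · refine (csInf_lt_iff hbdd1 hne1).2 ⟨a, Or.inl ⟨ha.1, ?_⟩, halt⟩
      rw [hHeq a ha.1 halt]; exact ha.2
    · simp only [Set.mem_singleton_iff] at ha
      subst ha; linarith


end
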